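/- arXiv:1403.0361 — 2 statements merged into one kernel-verified Lean document; each statement's English description precedes it below -/
import Mathlib

section
/- Under the same hypotheses, the Euclidean norm of ξ_i = δ_p X_i approximates the induced-metric norm of the dynamical vector field: ‖v‖_{g,a_i} := √(g(v,v))|_{a_i} = ‖ξ_i‖/δt + O(δt^p), where g is the metric induced on M by pulling back the ambient inner product through F. -/
open Filter Finset Topology Asymptotics

lemma euclid_norm_le_sum {n : ℕ} (x : EuclideanSpace ℝ (Fin n)) :
    ‖x‖ ≤ ∑ k, ‖x k‖ := by
  rw [EuclideanSpace.norm_eq]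
  have h1 : ∑ k, ‖x k‖ ^ 2 ≤ (∑ k, ‖x k‖) ^ 2 :=
    Finset.sum_sq_le_sq_sum_of_nonneg (fun i _ => norm_nonneg _)
  calc Real.sqrt (∑ k, ‖x k‖ ^ 2) ≤ Real.sqrt ((∑ k, ‖x k‖) ^ 2) := Real.sqrt_le_sqrt h1
    _ = ∑ k, ‖x k‖ := Real.sqrt_sq (Finset.sum_nonneg fun i _ => norm_nonneg _)

/-- Lemma 1, eq. (7): `‖v‖_{g,a_i} = ‖ξ_i‖/δt + O(δt^p)`.  Here `X t = F (Φ_t a₀)` is the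
observed trajectory in data space, so that the induced-metric norm of the dynamical vector
field is `‖v‖_{g,a_i} = ‖DF v‖ = ‖deriv X t_i‖`, and `ξ_i = δ_p X_i` is the finite-difference
vector with weights `w j`. -/
theorem stmt_1 {n : ℕ} (p : ℕ) (w : ℤ → ℝ)
    (X : ℝ → EuclideanSpace ℝ (Fin n)) (hX : ContDiff ℝ (p + 1) X)
    (hacc : ∀ f : ℝ → ℝ, ContDiff ℝ (p + 1) f → ∀ t : ℝ,
      (fun δt : ℝ => deriv f t - (∑ j ∈ Finset.Icc (-(p : ℤ)) (p : ℤ), w j * f (t + j * δt)) / δt)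
        =O[𝓝[>] 0] fun δt => δt ^ p)
    (t : ℝ) :
    (fun δt : ℝ =>
        ‖deriv X t‖ - ‖∑ j ∈ Finset.Icc (-(p : ℤ)) (p : ℤ), w j • X (t + j * δt)‖ / δt)
      =O[𝓝[>] 0] fun δt => δt ^ p := by
  set S : ℝ → EuclideanSpace ℝ (Fin n) :=
    fun δt => ∑ j ∈ Finset.Icc (-(p : ℤ)) (p : ℤ), w j • X (t + j * δt) with hS
  set E : ℝ → EuclideanSpace ℝ (Fin n) := fun δt => deriv X t - (δt)⁻¹ • S δt with hE
  have hXd : Differentiable ℝ X := hX.differentiable (by norm_cast)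
  -- coordinatewise
  have hk : ∀ k : Fin n, (fun δt => (E δt) k) =O[𝓝[>] 0] fun δt => δt ^ p := by
    intro k
    have hf : ContDiff ℝ (p + 1) (fun s => X s k) := by
      exact ((EuclideanSpace.proj (𝕜 := ℝ) k).contDiff.comp hX : _)
    have hd : deriv (fun s => X s k) t = deriv X t k := by
      have := ((EuclideanSpace.proj (𝕜 := ℝ) k).hasFDerivAt.comp_hasDerivAt t
        (hXd t).hasDerivAt)
      simpa [Function.comp_def] using this.deriv
    have := hacc (fun s => X s k) hf t
    refine this.congr' (Eventually.of_forall fun δt => ?_) (Eventually.of_forall fun _ => rfl)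
    simp only [hE, hS]
    rw [hd]
    congr 1
    rw [div_eq_inv_mul]
    have hsum : ((∑ j ∈ Finset.Icc (-(p : ℤ)) (p : ℤ), w j • X (t + j * δt)) k)
        = ∑ j ∈ Finset.Icc (-(p : ℤ)) (p : ℤ), w j * X (t + j * δt) k := by
      induction (Finset.Icc (-(p : ℤ)) (p : ℤ)) using Finset.induction with
      | empty => simp
      | insert _ _ h ih => rw [Finset.sum_insert h, Finset.sum_insert h, ← ih]; rfl
    show _ = (δt⁻¹ • ∑ j ∈ Finset.Icc (-(p : ℤ)) (p : ℤ), w j • X (t + j * δt)) k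
    rw [PiLp.smul_apply, hsum, smul_eq_mul]
  have hEO : E =O[𝓝[>] 0] fun δt => δt ^ p := by
    have hsum : (fun δt => ∑ k, ‖E δt k‖) =O[𝓝[>] 0] fun δt => δt ^ p := by
      have h := Asymptotics.IsBigO.sum (s := Finset.univ) (fun k _ => (hk k).norm_left)
      refine h.congr_left fun δt => ?_
      simp [Finset.sum_apply]
    refine IsBigO.trans ?_ hsum
    refine isBigO_of_le _ fun δt => ?_
    refine (euclid_norm_le_sum (E δt)).trans ?_
    exact le_abs_self _
  refine (IsBigO.trans ?_ hEO)
  rw [isBigO_iff]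
  refine ⟨1, ?_⟩
  filter_upwards [self_mem_nhdsWithin] with δt (hδt : 0 < δt)
  rw [one_mul]
  have : ‖S δt‖ / δt = ‖(δt)⁻¹ • S δt‖ := by
    rw [norm_smul, norm_inv, Real.norm_eq_abs, abs_of_pos hδt, div_eq_inv_mul]
  rw [Real.norm_eq_abs, this]
  exact abs_norm_sub_norm_le _ _
end

section
/- For two distinct data samples with displacement ω ≠ 0 and velocity vectors ξ_i, ξ_j, the ratio of cone kernels K_{δt,1}(a_i,a_j)/K_{δt,0}(a_i,a_j) = exp(‖ω‖²(1 − C_{ij})/(‖ξ_i‖‖ξ_j‖)) where C_{ij} = [(1−cos²θ_i)(1−cos²θ_j)]^{1/2} ≤ 1, with equality C_{ij} = 1 iff cos θ_i = cos θ_j = 0. In particular the ratio is ≥ 1, and equals 1 iff ω is g-orthogonal to both ξ_i and ξ_j. -/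
open scoped RealInnerProductSpace

/-- Kernel discrimination ratio (section 2.1): for nonzero `ξ_i, ξ_j, ω`,
`K_{δt,1}/K_{δt,0} = exp(‖ω‖²(1-C)/(‖ξ_i‖‖ξ_j‖))` with
`C = √((1-cos²θ_i)(1-cos²θ_j)) ≤ 1`; the ratio is `≥ 1`, equal to `1` iff `ω` is
orthogonal to both `ξ_i` and `ξ_j` (equivalently `C = 1` iff `cosθ_i = cosθ_j = 0`). -/
theorem stmt_11 {n : ℕ} (ξi ξj ω : EuclideanSpace ℝ (Fin n))
    (hξi : ξi ≠ 0) (hξj : ξj ≠ 0) (hω : ω ≠ 0) :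
    let ci : ℝ := ⟪ξi, ω⟫ / (‖ξi‖ * ‖ω‖)
    let cj : ℝ := ⟪ξj, ω⟫ / (‖ξj‖ * ‖ω‖)
    let K : ℝ → ℝ := fun ζ =>
      Real.exp (-(‖ω‖ ^ 2 / (‖ξi‖ * ‖ξj‖)) * Real.sqrt ((1 - ζ * ci ^ 2) * (1 - ζ * cj ^ 2)))
    let C : ℝ := Real.sqrt ((1 - ci ^ 2) * (1 - cj ^ 2))
    K 1 / K 0 = Real.exp (‖ω‖ ^ 2 * (1 - C) / (‖ξi‖ * ‖ξj‖)) ∧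
    C ≤ 1 ∧ (C = 1 ↔ ci = 0 ∧ cj = 0) ∧
    1 ≤ K 1 / K 0 ∧ (K 1 / K 0 = 1 ↔ ⟪ξi, ω⟫ = 0 ∧ ⟪ξj, ω⟫ = 0) := by
  intro ci cj K C
  have hωn : (0:ℝ) < ‖ω‖ := norm_pos_iff.mpr hω
  have hin : (0:ℝ) < ‖ξi‖ := norm_pos_iff.mpr hξi
  have hjn : (0:ℝ) < ‖ξj‖ := norm_pos_iff.mpr hξj
  have hci : |ci| ≤ 1 := by
    rw [abs_div, abs_of_pos (by positivity : (0:ℝ) < ‖ξi‖ * ‖ω‖)]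
    exact div_le_one_of_le₀ (abs_real_inner_le_norm _ _) (by positivity)
  have hcj : |cj| ≤ 1 := by
    rw [abs_div, abs_of_pos (by positivity : (0:ℝ) < ‖ξj‖ * ‖ω‖)]
    exact div_le_one_of_le₀ (abs_real_inner_le_norm _ _) (by positivity)
  have h1i : 0 ≤ 1 - ci ^ 2 := by nlinarith [sq_abs ci, abs_nonneg ci]
  have h1j : 0 ≤ 1 - cj ^ 2 := by nlinarith [sq_abs cj, abs_nonneg cj]
  have h1i' : 1 - ci ^ 2 ≤ 1 := by nlinarith [sq_nonneg ci]
  have h1j' : 1 - cj ^ 2 ≤ 1 := by nlinarith [sq_nonneg cj]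
  set a : ℝ := ‖ω‖ ^ 2 / (‖ξi‖ * ‖ξj‖) with ha_def
  have ha : 0 < a := by positivity
  have hC0 : 0 ≤ C := Real.sqrt_nonneg _
  have hC1 : C ≤ 1 := Real.sqrt_le_one.mpr (mul_le_one₀ h1i' h1j h1j')
  have hK1 : K 1 = Real.exp (-a * C) := by simp [K, C]; exact Or.inl ha_def.symm
  have hK0 : K 0 = Real.exp (-a) := by
    simp [K]; exact ha_def.symm
  have hratio : K 1 / K 0 = Real.exp (a * (1 - C)) := by
    rw [hK1, hK0, ← Real.exp_sub]; ring_nf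
  have hCiff : C = 1 ↔ ci = 0 ∧ cj = 0 := by
    constructor
    · intro h
      have hx : (1 - ci ^ 2) * (1 - cj ^ 2) = 1 := by
        have := Real.sq_sqrt (mul_nonneg h1i h1j)
        rw [show Real.sqrt ((1 - ci ^ 2) * (1 - cj ^ 2)) = C from rfl, h] at this
        linarith
      constructor
      · have : ci ^ 2 = 0 := by nlinarith [sq_nonneg ci, sq_nonneg cj]
        exact pow_eq_zero_iff (by norm_num) |>.mp this
      · have : cj ^ 2 = 0 := by nlinarith [sq_nonneg ci, sq_nonneg cj]
        exact pow_eq_zero_iff (by norm_num) |>.mp this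
    · rintro ⟨h1, h2⟩
      simp [C, h1, h2]
  refine ⟨by rw [hratio]; congr 1; rw [ha_def]; ring, hC1, hCiff, ?_, ?_⟩
  · rw [hratio]
    have : (0:ℝ) ≤ a * (1 - C) := mul_nonneg ha.le (by linarith)
    calc (1:ℝ) = Real.exp 0 := Real.exp_zero.symm
      _ ≤ Real.exp (a * (1 - C)) := Real.exp_le_exp.mpr this
  · rw [hratio]
    rw [Real.exp_eq_one_iff]
    have hmul : a * (1 - C) = 0 ↔ C = 1 := by
      constructor
      · intro h
        rcases mul_eq_zero.mp h with h' | h'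
        · exact absurd h' ha.ne'
        · linarith
      · intro h; rw [h]; ring
    rw [hmul, hCiff]
    have hi0 : ci = 0 ↔ ⟪ξi, ω⟫ = 0 := by
      simp only [ci, div_eq_zero_iff]
      constructor
      · rintro (h | h)
        · exact h
        · exact absurd h (by positivity)
      · exact Or.inl
    have hj0 : cj = 0 ↔ ⟪ξj, ω⟫ = 0 := by
      simp only [cj, div_eq_zero_iff]
      constructor
      · rintro (h | h)
        · exact h
        · exact absurd h (by positivity)
      · exact Or.inl
    rw [hi0, hj0]
end
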